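/- Let X be a complex Banach space with G_a(X) < 1, where G_a(X) is the gap for absolute convergence of Dirichlet series in X. Then every sequence (x_n)_{n≥1} in X satisfying Σ_n |x'(x_n)| < ∞ for every continuous linear functional x' ∈ X' is unconditionally summable in X. -/

import Mathlib

open Filter Finset Topology

/-- The abscissa of convergence `σ_c(D)` of the Dirichlet series `D = ∑ₙ aₙ n^{-s}`,
as an extended real number. -/
noncomputable def dirichletSigmaC {X : Type*} [NormedAddCommGroup X] [NormedSpace ℂ X]
    (a : ℕ → X) : EReal :=
  sInf { x : EReal | ∃ r : ℝ, x = (r : EReal) ∧ ∀ s : ℂ, r < s.re →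
    ∃ L : X, Tendsto
      (fun N : ℕ => ∑ n ∈ Finset.range N, (((n + 1 : ℕ) : ℂ) ^ (-s)) • a (n + 1))
      atTop (𝓝 L) }

/-- The abscissa of absolute convergence `σ_a(D)` of `D = ∑ₙ aₙ n^{-s}`. -/
noncomputable def dirichletSigmaA {X : Type*} [SeminormedAddCommGroup X]
    (a : ℕ → X) : EReal :=
  sInf { x : EReal | ∃ r : ℝ, x = (r : EReal) ∧ ∀ σ : ℝ, r < σ →
    Summable (fun n : ℕ => ‖a (n + 1)‖ * ((n + 1 : ℕ) : ℝ) ^ (-σ)) }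

/-- The abscissa of weak absolute convergence `σ_a^w(D) = sup_{x'} σ_a(x'(D))`. -/
noncomputable def dirichletSigmaAw {X : Type*} [NormedAddCommGroup X] [NormedSpace ℂ X]
    (a : ℕ → X) : EReal :=
  ⨆ x' : X →L[ℂ] ℂ, dirichletSigmaA (fun n => x' (a n))

/-- The gap for absolute convergence of Dirichlet series in `X`:
`G_a(X) = sup_D (σ_a(D) - σ_a^w(D))`, the supremum over all Dirichlet series with
coefficients in `X` and finite abscissa of convergence. -/
noncomputable def dirichletGapA (X : Type*) [NormedAddCommGroup X] [NormedSpace ℂ X] :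
    EReal :=
  sSup { g : EReal | ∃ a : ℕ → X, dirichletSigmaC a < ⊤ ∧
    g = dirichletSigmaA a - dirichletSigmaAw a }

section Aux

variable {X : Type*} [NormedAddCommGroup X] [NormedSpace ℂ X]

/-- Disjoint blocks with sums of norm at least ε, for a non-summable sequence. -/
lemma aux_blocks [CompleteSpace X] {x : ℕ → X} (hns : ¬ Summable x) :
    ∃ ε > (0:ℝ), ∃ F : ℕ → Finset ℕ,
      (∀ j k, j < k → Disjoint (F j) (F k)) ∧ ∀ k, ε ≤ ‖∑ n ∈ F k, x n‖ := by
  rw [summable_iff_vanishing_norm] at hns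
  push_neg at hns
  obtain ⟨ε, hε, H⟩ := hns
  choose T hTdis hTnorm using H
  let U : ℕ → Finset ℕ := fun k => Nat.rec ∅ (fun _ Uk => Uk ∪ T Uk) k
  have hUsucc : ∀ k, U (k+1) = U k ∪ T (U k) := fun k => rfl
  have hUmono : Monotone U := by
    apply monotone_nat_of_le_succ
    intro k
    rw [hUsucc]
    exact Finset.subset_union_left
  refine ⟨ε, hε, fun k => T (U k), ?_, fun k => hTnorm _⟩
  intro j k hjk
  have h1 : T (U j) ⊆ U k := by
    have : U (j+1) ⊆ U k := hUmono hjk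
    exact (Finset.subset_union_right).trans ((hUsucc j) ▸ this)
  exact (Finset.disjoint_of_subset_right h1 (hTdis (U k))).symm

/-- Weak ℓ¹ bound for block sums. -/
lemma aux_weak_blocks {x : ℕ → X} (hx : ∀ x' : X →L[ℂ] ℂ, Summable (fun n => ‖x' (x n)‖))
    {F : ℕ → Finset ℕ} (hdis : ∀ j k, j < k → Disjoint (F j) (F k)) (x' : X →L[ℂ] ℂ) :
    Summable (fun k => ‖x' (∑ n ∈ F k, x n)‖) := by
  apply summable_of_sum_range_le (c := ∑' n, ‖x' (x n)‖) (fun _ => norm_nonneg _)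
  intro K
  have h1 : ∀ k, ‖x' (∑ n ∈ F k, x n)‖ ≤ ∑ n ∈ F k, ‖x' (x n)‖ := by
    intro k
    rw [map_sum]
    exact norm_sum_le _ _
  calc ∑ k ∈ Finset.range K, ‖x' (∑ n ∈ F k, x n)‖
      ≤ ∑ k ∈ Finset.range K, ∑ n ∈ F k, ‖x' (x n)‖ :=
        Finset.sum_le_sum fun k _ => h1 k
    _ = ∑ n ∈ (Finset.range K).biUnion F, ‖x' (x n)‖ := by
        rw [Finset.sum_biUnion]
        intro j hj k hk hjk
        rcases lt_or_gt_of_ne hjk with hl | hl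
        · exact hdis j k hl
        · exact (hdis k j hl).symm
    _ ≤ ∑' n, ‖x' (x n)‖ := Summable.sum_le_tsum _ (fun _ _ => norm_nonneg _) (hx x')

/-- Uniform boundedness from weak ℓ¹. -/
lemma aux_bound {b : ℕ → X} (hb : ∀ x' : X →L[ℂ] ℂ, Summable (fun k => ‖x' (b k)‖)) :
    ∃ C : ℝ, ∀ k, ‖b k‖ ≤ C := by
  have := banach_steinhaus (g := fun k => NormedSpace.inclusionInDoubleDual ℂ X (b k)) ?_
  · obtain ⟨C', hC'⟩ := this
    refine ⟨C', fun k => ?_⟩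
    have : ‖NormedSpace.inclusionInDoubleDual ℂ X (b k)‖ = ‖b k‖ :=
      (NormedSpace.inclusionInDoubleDualLi ℂ (E := X)).norm_map (b k)
    rw [← this]; exact hC' k
  · intro x'
    refine ⟨∑' k, ‖x' (b k)‖, fun k => ?_⟩
    exact Summable.le_tsum (hb x') k (fun m _ => norm_nonneg _)

lemma aux_sigmaC_lt_top {a : ℕ → X} [CompleteSpace X] {C : ℝ} (hC : ∀ n, ‖a n‖ ≤ C) :
    dirichletSigmaC a < ⊤ := by
  have h2 : ((2:ℝ) : EReal) ∈ { x : EReal | ∃ r : ℝ, x = (r : EReal) ∧ ∀ s : ℂ, r < s.re →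
      ∃ L : X, Tendsto
        (fun N : ℕ => ∑ n ∈ Finset.range N, (((n + 1 : ℕ) : ℂ) ^ (-s)) • a (n + 1))
        atTop (𝓝 L) } := by
    refine ⟨2, rfl, fun s hs => ?_⟩
    have hsum : Summable (fun n : ℕ => (((n + 1 : ℕ) : ℂ) ^ (-s)) • a (n + 1)) := by
      have hbig : Summable (fun n : ℕ => C * ((n + 1 : ℕ) : ℝ) ^ (-s.re)) := by
        apply Summable.mul_left
        have : Summable (fun n : ℕ => ((n:ℝ)) ^ (-s.re)) :=
          Real.summable_nat_rpow.mpr (by linarith)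
        have := (summable_nat_add_iff 1).mpr this
        simpa using this
      apply Summable.of_norm_bounded hbig
      intro n
      rw [norm_smul, Complex.norm_natCast_cpow_of_pos (Nat.succ_pos n)]
      have : (-s).re = -s.re := by simp
      rw [this, mul_comm]
      exact mul_le_mul_of_nonneg_right (hC _) (Real.rpow_nonneg (by positivity) _)
    exact ⟨∑' n, (((n + 1 : ℕ) : ℂ) ^ (-s)) • a (n + 1), hsum.hasSum.tendsto_sum_nat⟩
  calc dirichletSigmaC a ≤ ((2:ℝ) : EReal) := sInf_le h2
    _ < ⊤ := EReal.coe_lt_top 2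

lemma aux_sigmaA_ge_one {a : ℕ → X} {ε : ℝ} (hε : 0 < ε) (ha : ∀ n, ε ≤ ‖a (n+1)‖) :
    ((1:ℝ) : EReal) ≤ dirichletSigmaA a := by
  apply le_sInf
  rintro y ⟨r, rfl, hr⟩
  rw [EReal.coe_le_coe_iff]
  by_contra hlt
  push_neg at hlt
  set σ : ℝ := (r + 1) / 2 with hσdef
  have hrσ : r < σ := by rw [hσdef]; linarith
  have hσ1 : σ < 1 := by rw [hσdef]; linarith
  have hsum := hr σ hrσ
  have hsmall : Summable (fun n : ℕ => ε * ((n + 1 : ℕ) : ℝ) ^ (-σ)) := by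
    apply hsum.of_nonneg_of_le (fun n => by positivity)
    intro n
    exact mul_le_mul_of_nonneg_right (ha n) (Real.rpow_nonneg (by positivity) _)
  have hpow : Summable (fun n : ℕ => ((n + 1 : ℕ) : ℝ) ^ (-σ)) :=
    (summable_mul_left_iff hε.ne').mp hsmall
  have : Summable (fun n : ℕ => ((n:ℝ)) ^ (-σ)) := by
    rw [← summable_nat_add_iff 1]
    simpa using hpow
  rw [Real.summable_nat_rpow] at this
  linarith

lemma aux_sigmaAw_le_zero {a : ℕ → X}
    (ha : ∀ x' : X →L[ℂ] ℂ, Summable (fun n => ‖x' (a (n+1))‖)) :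
    dirichletSigmaAw a ≤ ((0:ℝ) : EReal) := by
  apply iSup_le
  intro x'
  apply sInf_le
  refine ⟨0, rfl, fun σ hσ => ?_⟩
  apply (ha x').of_nonneg_of_le (fun n => by positivity)
  intro n
  have h1 : ((n + 1 : ℕ) : ℝ) ^ (-σ) ≤ 1 :=
    Real.rpow_le_one_of_one_le_of_nonpos (by exact_mod_cast Nat.one_le_iff_ne_zero.mpr (Nat.succ_ne_zero n)) (by linarith)
  calc ‖x' (a (n+1))‖ * ((n + 1 : ℕ) : ℝ) ^ (-σ) ≤ ‖x' (a (n+1))‖ * 1 :=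
        mul_le_mul_of_nonneg_left h1 (norm_nonneg _)
    _ = ‖x' (a (n+1))‖ := mul_one _

end Aux

/-- If `G_a(X) < 1`, then every weakly unconditionally summable sequence in the complex
Banach space `X` is unconditionally summable. -/
theorem weakly_summable_summable_of_gapA_lt_one
    (X : Type*) [NormedAddCommGroup X] [NormedSpace ℂ X] [CompleteSpace X]
    (h : dirichletGapA X < ((1 : ℝ) : EReal))
    (x : ℕ → X) (hx : ∀ x' : X →L[ℂ] ℂ, Summable (fun n => ‖x' (x n)‖)) :
    Summable x := by
  by_contra hns
  obtain ⟨ε, hε, F, hdis, hnorm⟩ := aux_blocks hns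
  have hwb : ∀ x' : X →L[ℂ] ℂ, Summable (fun k => ‖x' (∑ n ∈ F k, x n)‖) :=
    fun x' => aux_weak_blocks hx hdis x'
  obtain ⟨C, hC⟩ := aux_bound hwb
  set a : ℕ → X := fun n => ∑ m ∈ F (n - 1), x m with ha
  have haeq : ∀ n, a (n + 1) = ∑ m ∈ F n, x m := fun n => rfl
  have hCa : ∀ n, ‖a n‖ ≤ C := fun n => hC _
  have h1 : dirichletSigmaC a < ⊤ := aux_sigmaC_lt_top hCa
  have h2 : ((1:ℝ) : EReal) ≤ dirichletSigmaA a :=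
    aux_sigmaA_ge_one hε (fun n => by rw [haeq]; exact hnorm n)
  have h3 : dirichletSigmaAw a ≤ ((0:ℝ) : EReal) :=
    aux_sigmaAw_le_zero (fun x' => hwb x')
  have hmem : dirichletSigmaA a - dirichletSigmaAw a ∈
      { g : EReal | ∃ a : ℕ → X, dirichletSigmaC a < ⊤ ∧
        g = dirichletSigmaA a - dirichletSigmaAw a } := ⟨a, h1, rfl⟩
  have hle : ((1:ℝ) : EReal) ≤ dirichletGapA X := by
    calc ((1:ℝ) : EReal) = ((1:ℝ) : EReal) - ((0:ℝ) : EReal) := by norm_num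
      _ ≤ dirichletSigmaA a - dirichletSigmaAw a := EReal.sub_le_sub h2 h3
      _ ≤ dirichletGapA X := le_sSup hmem
  exact absurd h (not_lt.mpr hle)
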